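/- arXiv:math/0605411 — 2 statements merged into one kernel-verified Lean document; each statement's English description precedes it below -/
import Mathlib

section
/- Let t ∈ C be n-ary and unspoilt, and assume t depends on its first variable. Then t(2, x_2, …, x_n) ∈ {2,4} for all x_2, …, x_n ∈ X. -/
universe u v

/-- A clone on `X`: a set of finitary operations (of each arity `n + 1 ≥ 1`)
containing all projections and closed under composition. -/
structure Clone (X : Type u) where
  carrier : ∀ n : ℕ, Set ((Fin (n + 1) → X) → X)
  proj_mem : ∀ (n : ℕ) (i : Fin (n + 1)), (fun x => x i) ∈ carrier n
  comp_mem : ∀ {m n : ℕ} (f : (Fin (m + 1) → X) → X)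
      (g : Fin (m + 1) → (Fin (n + 1) → X) → X),
      f ∈ carrier m → (∀ i, g i ∈ carrier n) →
      (fun x => f fun i => g i x) ∈ carrier n

namespace Clone

variable {X : Type u}

theorem carrier_injective : Function.Injective (Clone.carrier (X := X)) := by
  rintro ⟨c, _, _⟩ ⟨d, _, _⟩ h
  simpa using h

instance : PartialOrder (Clone X) where
  le C D := ∀ n, C.carrier n ⊆ D.carrier n
  le_refl _ _ := subset_rfl
  le_trans _ _ _ h₁ h₂ n := (h₁ n).trans (h₂ n)
  le_antisymm _ _ h₁ h₂ :=
    carrier_injective (funext fun n => subset_antisymm (h₁ n) (h₂ n))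

instance : InfSet (Clone X) where
  sInf S :=
    { carrier := fun n => ⋂ C ∈ S, C.carrier n
      proj_mem := fun n i => Set.mem_iInter₂.2 fun C _ => C.proj_mem n i
      comp_mem := fun f g hf hg => Set.mem_iInter₂.2 fun C hC =>
        C.comp_mem f g (Set.mem_iInter₂.1 hf C hC)
          fun i => Set.mem_iInter₂.1 (hg i) C hC }

/-- The lattice `Cl(X)` of all clones on `X` is a complete lattice
(with infima given by intersection). -/
instance : CompleteLattice (Clone X) :=
  completeLatticeOfInf (Clone X) (fun S =>
    ⟨fun C hC n _ hx => Set.mem_iInter₂.1 hx C hC,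
     fun _ hD n _ hx => Set.mem_iInter₂.2 fun C hC => hD hC n hx⟩)

/-- The clone generated by a family `F` of operations:
the smallest clone whose carrier contains `F`. -/
def cloneGen (F : ∀ n : ℕ, Set ((Fin (n + 1) → X) → X)) : Clone X :=
  sInf {C : Clone X | ∀ n, F n ⊆ C.carrier n}

end Clone

attribute [local instance] Classical.propDecidable

noncomputable section Construction

variable {X : Type u} {P : Type v} [SemilatticeSup P]
variable (e0 e1 e2 e4 : X) (Af : P → Set X)

/-- `A = X ∖ {0, 1, 2, 4}`. -/
def Aset : Set X := ({e0, e1, e2, e4} : Set X)ᶜ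

/-- The unary function `φ_p`: the characteristic function of `A_p` on `A`,
fixing `2` and sending `{0, 1, 4}` to `4`. -/
def phi (p : P) (x : X) : X :=
  if x ∈ Af p then e1
  else if x ∈ Aset e0 e1 e2 e4 then e0
  else if x = e2 then e2
  else e4

/-- The ternary function `m_p^{q₁,q₂}`. -/
def mOp (p q1 q2 : P) (x y z : X) : X :=
  if y = phi e0 e1 e2 e4 Af q1 x ∧ z = phi e0 e1 e2 e4 Af q2 x then
    phi e0 e1 e2 e4 Af p x
  else if (x = e2 ∨ y = e2 ∨ z = e2) ∧ y ≠ e1 ∧ y ≠ e4 ∧ z ≠ e1 ∧ z ≠ e4 then e2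
  else e4

/-- `φ_p` as a unary operation (member of arity-1 part of a clone). -/
def phi1 (p : P) : (Fin 1 → X) → X := fun x => phi e0 e1 e2 e4 Af p (x 0)

/-- `m_p^{q₁,q₂}` as a ternary operation. -/
def m3 (p q1 q2 : P) : (Fin 3 → X) → X :=
  fun x => mOp e0 e1 e2 e4 Af p q1 q2 (x 0) (x 1) (x 2)

/-- The family `Φ_Q = {φ_p : p ∈ Q}`, as a family of operations indexed by arity. -/
def PhiFam (Q : Set P) : ∀ n : ℕ, Set ((Fin (n + 1) → X) → X)
  | 0 => {f | ∃ p ∈ Q, f = phi1 e0 e1 e2 e4 Af p}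
  | _ + 1 => ∅

/-- The family `M = {m_p^{q₁,q₂} : p ≤ q₁ ∨ q₂}`, as a family of operations indexed by arity. -/
def MFam : ∀ n : ℕ, Set ((Fin (n + 1) → X) → X)
  | 2 => {f | ∃ p q1 q2 : P, p ≤ q1 ⊔ q2 ∧ f = m3 e0 e1 e2 e4 Af p q1 q2}
  | _ => ∅

/-- The clone `C = ⟨Φ ∪ M⟩`. -/
def CClone : Clone X :=
  Clone.cloneGen fun n => PhiFam e0 e1 e2 e4 Af Set.univ n ∪ MFam e0 e1 e2 e4 Af n

/-- A function depends on its `i`-th variable iff it takes different values on two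
tuples differing only in the `i`-th coordinate. -/
def DependsOnVar {n : ℕ} (t : (Fin n → X) → X) (i : Fin n) : Prop :=
  ∃ a b : Fin n → X, (∀ j, j ≠ i → a j = b j) ∧ t a ≠ t b

/-- A unary function is distracted iff it takes a value in `{2, 4}` somewhere on `A`. -/
def Distracted (f : X → X) : Prop :=
  ∃ a ∈ Aset e0 e1 e2 e4, f a = e2 ∨ f a = e4

/-- The unary function `X → X` corresponding to a unary operation. -/
def toFun1 (u : (Fin 1 → X) → X) : X → X := fun a => u fun _ => a

/-- An `n`-ary member of `C` is unspoilt iff some substitution of unary members of `C`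
into it yields an element of `Φ`. -/
def Unspoilt {n : ℕ} (t : (Fin (n + 1) → X) → X) : Prop :=
  ∃ ts : Fin (n + 1) → (Fin 1 → X) → X,
    (∀ i, ts i ∈ (CClone e0 e1 e2 e4 Af).carrier 0) ∧
    (fun x : Fin 1 → X => t fun i => ts i x) ∈ PhiFam e0 e1 e2 e4 Af Set.univ 0

/-- The family `S` of all spoilt members of `C`. -/
def SpoiltFam (n : ℕ) : Set ((Fin (n + 1) → X) → X) :=
  {t | t ∈ (CClone e0 e1 e2 e4 Af).carrier n ∧ ¬ Unspoilt e0 e1 e2 e4 Af t}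

/-- The clone `C_I = ⟨Φ_I ∪ M ∪ S⟩`. -/
def CI (I : Set P) : Clone X :=
  Clone.cloneGen fun n =>
    PhiFam e0 e1 e2 e4 Af I n ∪ MFam e0 e1 e2 e4 Af n ∪ SpoiltFam e0 e1 e2 e4 Af n

end Construction

/-- An ideal of a join-semilattice: a downward closed subset closed under finite joins. -/
def IsIdealP {P : Type v} [SemilatticeSup P] (I : Set P) : Prop :=
  (∀ p q : P, p ≤ q → q ∈ I → p ∈ I) ∧ ∀ p q : P, p ∈ I → q ∈ I → p ⊔ q ∈ I

/-- The ideal of `P` generated by a subset `I`. -/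
def idealGen {P : Type v} [SemilatticeSup P] (I : Set P) : Set P :=
  ⋂₀ {J : Set P | IsIdealP J ∧ I ⊆ J}

section AuxGood

variable {X : Type u} {P : Type v} [SemilatticeSup P]
variable {e0 e1 e2 e4 : X} {Af : P → Set X}

/-- The key invariant: if `t` depends on variable `i` and `x i ∈ {e2, e4}`,
then `t x ∈ {e2, e4}`. -/
def Good24 {X : Type u} (e2 e4 : X) {n : ℕ} (t : (Fin (n + 1) → X) → X) : Prop :=
  ∀ i, DependsOnVar t i → ∀ x, (x i = e2 ∨ x i = e4) → (t x = e2 ∨ t x = e4)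

/-- If `f u ≠ f v`, then `u` and `v` differ on some coordinate on which `f` depends. -/
lemma exists_dep_of_ne {X : Type u} {m : ℕ} (f : (Fin (m + 1) → X) → X)
    (s : Finset (Fin (m + 1))) :
    ∀ u v : Fin (m + 1) → X, (∀ i, i ∉ s → u i = v i) → f u ≠ f v →
      ∃ i, u i ≠ v i ∧ DependsOnVar f i := by
  induction s using Finset.induction_on with
  | empty =>
    intro u v h hne
    exact absurd (congrArg f (funext fun i => h i (by simp))) hne
  | @insert a s ha ih =>
    intro u v h hne
    by_cases hua : u a = v a
    · refine ih u v (fun i hi => ?_) hne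
      by_cases hia : i = a
      · subst hia; exact hua
      · exact h i (by simp [hia, hi])
    · set w := Function.update u a (v a) with hw
      by_cases hfw : f u = f w
      · have h2 : ∀ i, i ∉ s → w i = v i := by
          intro i hi
          by_cases hia : i = a
          · subst hia; simp [hw]
          · rw [hw, Function.update_of_ne hia]
            exact h i (by simp [hia, hi])
        obtain ⟨i, hi1, hi2⟩ := ih w v h2 (fun hc => hne (hfw.trans hc))
        refine ⟨i, ?_, hi2⟩
        by_cases hia : i = a
        · subst hia; exact hua
        · rwa [hw, Function.update_of_ne hia] at hi1
      · exact ⟨a, hua, u, w, fun j hj => (Function.update_of_ne hj _ _).symm, hfw⟩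

/-- The operations satisfying `Good24` form a clone. -/
def GoodClone (X : Type u) (e2 e4 : X) : Clone X where
  carrier n := {t | Good24 e2 e4 t}
  proj_mem n i := by
    intro j hdep x hx
    have hji : j = i := by
      by_contra hji
      obtain ⟨a, b, hab, hne⟩ := hdep
      exact hne (hab i fun h => hji h.symm)
    subst hji
    exact hx
  comp_mem := by
    intro m n f g hf hg j hdep x hx
    obtain ⟨a, b, hab, hne⟩ := hdep
    obtain ⟨i, hgi, hfi⟩ :=
      exists_dep_of_ne f Finset.univ (fun k => g k a) (fun k => g k b)
        (fun i hi => absurd (Finset.mem_univ i) hi) hne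
    exact hf i hfi _ (hg i j ⟨a, b, hab, hgi⟩ x hx)

lemma e2_not_Aset (h : e2 ≠ e2 → False) : e2 ∉ Aset e0 e1 e2 e4 := by
  simp [Aset]

lemma phi_e2 (hAf : ∀ p : P, Af p ⊆ Aset e0 e1 e2 e4) (p : P) :
    phi e0 e1 e2 e4 Af p e2 = e2 := by
  unfold phi
  rw [if_neg (fun h => (by simp [Aset] : e2 ∉ Aset e0 e1 e2 e4) (hAf p h)),
      if_neg (by simp [Aset] : e2 ∉ Aset e0 e1 e2 e4), if_pos rfl]

lemma phi_e4 (hAf : ∀ p : P, Af p ⊆ Aset e0 e1 e2 e4) (h24 : e2 ≠ e4) (p : P) :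
    phi e0 e1 e2 e4 Af p e4 = e4 := by
  unfold phi
  rw [if_neg (fun h => (by simp [Aset] : e4 ∉ Aset e0 e1 e2 e4) (hAf p h)),
      if_neg (by simp [Aset] : e4 ∉ Aset e0 e1 e2 e4),
      if_neg (fun h => h24 h.symm)]

lemma phi_eq_e2 (h02 : e0 ≠ e2) (h12 : e1 ≠ e2) (h24 : e2 ≠ e4) {p : P} {x : X}
    (h : phi e0 e1 e2 e4 Af p x = e2) : x = e2 := by
  unfold phi at h
  split_ifs at h with h1 h2 h3
  · exact absurd h h12
  · exact absurd h h02
  · exact h3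
  · exact absurd h.symm h24

lemma phi_eq_e4 (hAf : ∀ p : P, Af p ⊆ Aset e0 e1 e2 e4)
    (h04 : e0 ≠ e4) (h14 : e1 ≠ e4) (h24 : e2 ≠ e4) {q : P} {x : X}
    (h : phi e0 e1 e2 e4 Af q x = e4) (p : P) : phi e0 e1 e2 e4 Af p x = e4 := by
  unfold phi at h ⊢
  split_ifs at h with h1 h2 h3
  · exact absurd h h14
  · exact absurd h h04
  · exact absurd h h24
  · rw [if_neg (fun hx => h2 (hAf p hx)), if_neg h2, if_neg h3]

lemma mOp24 (hAf : ∀ p : P, Af p ⊆ Aset e0 e1 e2 e4)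
    (h02 : e0 ≠ e2) (h04 : e0 ≠ e4) (h12 : e1 ≠ e2) (h14 : e1 ≠ e4) (h24 : e2 ≠ e4)
    (p q1 q2 : P) (a b c : X)
    (h : (a = e2 ∨ a = e4) ∨ (b = e2 ∨ b = e4) ∨ (c = e2 ∨ c = e4)) :
    mOp e0 e1 e2 e4 Af p q1 q2 a b c = e2 ∨ mOp e0 e1 e2 e4 Af p q1 q2 a b c = e4 := by
  unfold mOp
  split_ifs with h1 h2
  · obtain ⟨hb, hc⟩ := h1
    rcases h with (ha | ha) | (hb' | hb') | (hc' | hc')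
    · subst ha; exact Or.inl (phi_e2 hAf p)
    · subst ha; exact Or.inr (phi_e4 hAf h24 p)
    · have := phi_eq_e2 h02 h12 h24 (hb.symm.trans hb')
      subst this; exact Or.inl (phi_e2 hAf p)
    · exact Or.inr (phi_eq_e4 hAf h04 h14 h24 (hb.symm.trans hb') p)
    · have := phi_eq_e2 h02 h12 h24 (hc.symm.trans hc')
      subst this; exact Or.inl (phi_e2 hAf p)
    · exact Or.inr (phi_eq_e4 hAf h04 h14 h24 (hc.symm.trans hc') p)
  · exact Or.inl rfl
  · exact Or.inr rfl

lemma generators_good (hAf : ∀ p : P, Af p ⊆ Aset e0 e1 e2 e4)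
    (h02 : e0 ≠ e2) (h04 : e0 ≠ e4) (h12 : e1 ≠ e2) (h14 : e1 ≠ e4) (h24 : e2 ≠ e4) :
    ∀ k, PhiFam e0 e1 e2 e4 Af Set.univ k ∪ MFam e0 e1 e2 e4 Af k ⊆
      (GoodClone X e2 e4).carrier k := by
  intro k f hf
  rcases hf with hf | hf
  · match k with
    | 0 =>
      obtain ⟨p, -, rfl⟩ := hf
      intro i hdep x hx
      have hix : x i = x 0 := by
        have : i = 0 := Fin.eq_zero i
        rw [this]
      rw [hix] at hx
      show phi e0 e1 e2 e4 Af p (x 0) = e2 ∨ phi e0 e1 e2 e4 Af p (x 0) = e4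
      rcases hx with h | h
      · rw [h]; exact Or.inl (phi_e2 hAf p)
      · rw [h]; exact Or.inr (phi_e4 hAf h24 p)
    | k + 1 => exact absurd hf (by simp [PhiFam])
  · match k with
    | 0 => exact absurd hf (by simp [MFam])
    | 1 => exact absurd hf (by simp [MFam])
    | 2 =>
      obtain ⟨p, q1, q2, -, rfl⟩ := hf
      intro i hdep x hx
      have h3 : (x 0 = e2 ∨ x 0 = e4) ∨ (x 1 = e2 ∨ x 1 = e4) ∨
          (x 2 = e2 ∨ x 2 = e4) := by
        fin_cases i
        · exact Or.inl hx
        · exact Or.inr (Or.inl hx)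
        · exact Or.inr (Or.inr hx)
      exact mOp24 hAf h02 h04 h12 h14 h24 p q1 q2 (x 0) (x 1) (x 2) h3
    | k + 3 => exact absurd hf (by simp [MFam])

lemma CClone_le_Good (hAf : ∀ p : P, Af p ⊆ Aset e0 e1 e2 e4)
    (h02 : e0 ≠ e2) (h04 : e0 ≠ e4) (h12 : e1 ≠ e2) (h14 : e1 ≠ e4) (h24 : e2 ≠ e4)
    {k : ℕ} {t : (Fin (k + 1) → X) → X}
    (ht : t ∈ (CClone e0 e1 e2 e4 Af).carrier k) : Good24 e2 e4 t := by
  have hmem : GoodClone X e2 e4 ∈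
      {C : Clone X | ∀ m, PhiFam e0 e1 e2 e4 Af Set.univ m ∪ MFam e0 e1 e2 e4 Af m ⊆
        C.carrier m} := generators_good hAf h02 h04 h12 h14 h24
  exact Set.mem_iInter₂.1 ht (GoodClone X e2 e4) hmem

end AuxGood

/-- Lemma 5: an unspoilt member of `C` depending on its first variable takes only
values in `{2, 4}` when `2` is substituted for its first variable. -/
theorem inserting_two
    {X : Type u} {P : Type v} [Infinite X] [SemilatticeSup P]
    (e0 e1 e2 e4 : X)
    (hdist : e0 ≠ e1 ∧ e0 ≠ e2 ∧ e0 ≠ e4 ∧ e1 ≠ e2 ∧ e1 ≠ e4 ∧ e2 ≠ e4)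
    (hcard : Cardinal.lift.{u} (Cardinal.mk P) ≤ Cardinal.lift.{v} (2 ^ Cardinal.mk X))
    (Af : P → Set X) (hAf : ∀ p : P, Af p ⊆ Aset e0 e1 e2 e4)
    (hcover : ∀ (p : P) (k : ℕ) (q : Fin k → P),
      (∀ i, p ≠ q i) → ¬ Af p ⊆ ⋃ i, Af (q i))
    (n : ℕ) (t : (Fin (n + 1) → X) → X)
    (ht : t ∈ (CClone e0 e1 e2 e4 Af).carrier n)
    (hunsp : Unspoilt e0 e1 e2 e4 Af t)
    (hdep : DependsOnVar t 0)
    (x : Fin (n + 1) → X) (hx : x 0 = e2) :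
    t x = e2 ∨ t x = e4 := by
  obtain ⟨h01, h02, h04, h12, h14, h24⟩ := hdist
  exact CClone_le_Good hAf h02 h04 h12 h14 h24 ht 0 hdep x (Or.inl hx)
end

section
/- Let r(x,y) be a reduced term representation of a binary function in C that is unspoilt and depends on both of its variables, and let a ∈ A. Then the function represented by r satisfies r(2,a) = 4 if and only if a ∈ ⋃{A_v : φ_v(y) ∈ Leaf(r)}. -/
universe u v

attribute [local instance] Classical.propDecidable

/-- Terms over the function symbols `Φ ∪ M` in two variables `x, y`
(projections appear only as variables). -/
inductive CTerm (P : Type v) : Type v where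
  | varx : CTerm P
  | vary : CTerm P
  | app1 : P → CTerm P → CTerm P
  | app3 : P → P → P → CTerm P → CTerm P → CTerm P → CTerm P

/-- Evaluation of a term at `(x, y)`: `app1 p` is interpreted as `φ_p` and
`app3 p q1 q2` as `m_p^(q1,q2)`. -/
noncomputable def CTerm.eval {X : Type u} {P : Type v} (e0 e1 e2 e4 : X)
    (Af : P → Set X) : CTerm P → X → X → X
  | .varx, x, _ => x
  | .vary, _, y => y
  | .app1 p t, x, y => phi e0 e1 e2 e4 Af p (CTerm.eval e0 e1 e2 e4 Af t x y)
  | .app3 p q1 q2 t1 t2 t3, x, y =>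
      mOp e0 e1 e2 e4 Af p q1 q2 (CTerm.eval e0 e1 e2 e4 Af t1 x y)
        (CTerm.eval e0 e1 e2 e4 Af t2 x y) (CTerm.eval e0 e1 e2 e4 Af t3 x y)

/-- A term is a term over `Φ ∪ M` iff every ternary symbol `m_p^(q1,q2)` in it
satisfies `p ≤ q1 ⊔ q2`. -/
def CTerm.Valid {P : Type v} [SemilatticeSup P] : CTerm P → Prop
  | .varx => True
  | .vary => True
  | .app1 _ t => t.Valid
  | .app3 p q1 q2 t1 t2 t3 => p ≤ q1 ⊔ q2 ∧ t1.Valid ∧ t2.Valid ∧ t3.Valid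

/-- The set of indices `v` such that `φ_v(y)` is a leaf of the term
(a leaf being a subterm with exactly one function symbol). -/
noncomputable def CTerm.leafPhiY {P : Type v} : CTerm P → Set P
  | .varx => ∅
  | .vary => ∅
  | .app1 p t => if t = CTerm.vary then {p} else t.leafPhiY
  | .app3 _ _ _ t1 t2 t3 => t1.leafPhiY ∪ t2.leafPhiY ∪ t3.leafPhiY

/-- A term is reduced iff it has no subterm of the form
`m_p^(q1,q2)(v, φ_(q1)(v), φ_(q2)(v))` with `v` a variable. -/
def CTerm.Reduced {P : Type v} : CTerm P → Prop
  | .varx => True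
  | .vary => True
  | .app1 _ t => t.Reduced
  | .app3 _ q1 q2 t1 t2 t3 =>
      (¬ ∃ v : CTerm P, (v = CTerm.varx ∨ v = CTerm.vary) ∧
          t1 = v ∧ t2 = CTerm.app1 q1 v ∧ t3 = CTerm.app1 q2 v) ∧
      t1.Reduced ∧ t2.Reduced ∧ t3.Reduced
section Lemma6Aux

variable {X : Type u} {P : Type v} [SemilatticeSup P]

lemma mem_Aset_iff {e0 e1 e2 e4 x : X} :
    x ∈ Aset e0 e1 e2 e4 ↔ x ≠ e0 ∧ x ≠ e1 ∧ x ≠ e2 ∧ x ≠ e4 := by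
  simp [Aset]

lemma not_mem_Aset {e0 e1 e2 e4 x : X}
    (h : x = e0 ∨ x = e1 ∨ x = e2 ∨ x = e4) : x ∉ Aset e0 e1 e2 e4 := by
  simp only [mem_Aset_iff]
  tauto

variable {e0 e1 e2 e4 : X} {Af : P → Set X}

lemma phi_consts (p : P) (x : X) :
    phi e0 e1 e2 e4 Af p x = e0 ∨ phi e0 e1 e2 e4 Af p x = e1 ∨
      phi e0 e1 e2 e4 Af p x = e2 ∨ phi e0 e1 e2 e4 Af p x = e4 := by
  unfold phi; split_ifs <;> tauto

lemma mOp_consts (p q1 q2 : P) (x y z : X) :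
    mOp e0 e1 e2 e4 Af p q1 q2 x y z = e0 ∨ mOp e0 e1 e2 e4 Af p q1 q2 x y z = e1 ∨
      mOp e0 e1 e2 e4 Af p q1 q2 x y z = e2 ∨ mOp e0 e1 e2 e4 Af p q1 q2 x y z = e4 := by
  unfold mOp; split_ifs with h1 h2
  · exact phi_consts p x
  · tauto
  · tauto

lemma phi_A (hAf : ∀ p : P, Af p ⊆ Aset e0 e1 e2 e4) (p : P) {x : X}
    (hx : x ∈ Aset e0 e1 e2 e4) :
    phi e0 e1 e2 e4 Af p x = if x ∈ Af p then e1 else e0 := by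
  unfold phi
  by_cases h : x ∈ Af p
  · simp [h]
  · simp [h, hx]

lemma phi_notA (hAf : ∀ p : P, Af p ⊆ Aset e0 e1 e2 e4) (p : P) {z : X}
    (hz : z ∉ Aset e0 e1 e2 e4) :
    phi e0 e1 e2 e4 Af p z = e2 ∨ phi e0 e1 e2 e4 Af p z = e4 := by
  unfold phi
  rw [if_neg (fun h => hz (hAf p h)), if_neg hz]
  split_ifs <;> tauto

lemma mOp_eq1 {p q1 q2 : P} {x y z : X}
    (h1 : y = phi e0 e1 e2 e4 Af q1 x) (h2 : z = phi e0 e1 e2 e4 Af q2 x) :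
    mOp e0 e1 e2 e4 Af p q1 q2 x y z = phi e0 e1 e2 e4 Af p x := by
  unfold mOp; rw [if_pos ⟨h1, h2⟩]

lemma mOp_eq2 {p q1 q2 : P} {x y z : X}
    (h : ¬(y = phi e0 e1 e2 e4 Af q1 x ∧ z = phi e0 e1 e2 e4 Af q2 x))
    (h2 : x = e2 ∨ y = e2 ∨ z = e2)
    (hy1 : y ≠ e1) (hy4 : y ≠ e4) (hz1 : z ≠ e1) (hz4 : z ≠ e4) :
    mOp e0 e1 e2 e4 Af p q1 q2 x y z = e2 := by
  unfold mOp; rw [if_neg h, if_pos ⟨h2, hy1, hy4, hz1, hz4⟩]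

lemma mOp_eq4 {p q1 q2 : P} {x y z : X}
    (h : ¬(y = phi e0 e1 e2 e4 Af q1 x ∧ z = phi e0 e1 e2 e4 Af q2 x))
    (h2 : ¬((x = e2 ∨ y = e2 ∨ z = e2) ∧ y ≠ e1 ∧ y ≠ e4 ∧ z ≠ e1 ∧ z ≠ e4)) :
    mOp e0 e1 e2 e4 Af p q1 q2 x y z = e4 := by
  unfold mOp; rw [if_neg h, if_neg h2]

lemma index_eq (hAf : ∀ p : P, Af p ⊆ Aset e0 e1 e2 e4)
    (hcover : ∀ (p : P) (k : ℕ) (q : Fin k → P),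
      (∀ i, p ≠ q i) → ¬ Af p ⊆ ⋃ i, Af (q i))
    {q c : P}
    (h : ∀ w ∈ Aset e0 e1 e2 e4, (w ∈ Af q ↔ w ∈ Af c)) : q = c := by
  by_contra hne
  exact hcover q 1 (fun _ => c) (fun _ => hne)
    (fun w hw => Set.mem_iUnion.2 ⟨0, (h w (hAf q hw)).1 hw⟩)

lemma mem_triple_union {S T U : Set P} {a : X} :
    (a ∈ ⋃ v ∈ S ∪ T ∪ U, Af v) ↔
      (a ∈ ⋃ v ∈ S, Af v) ∨ (a ∈ ⋃ v ∈ T, Af v) ∨ (a ∈ ⋃ v ∈ U, Af v) := by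
  simp only [Set.mem_iUnion, Set.mem_union, exists_prop]
  aesop

lemma eval_var_or_consts (s : CTerm P) (x y : X) :
    (s = CTerm.varx ∧ s.eval e0 e1 e2 e4 Af x y = x) ∨
    (s = CTerm.vary ∧ s.eval e0 e1 e2 e4 Af x y = y) ∨
    (s.eval e0 e1 e2 e4 Af x y = e0 ∨ s.eval e0 e1 e2 e4 Af x y = e1 ∨
      s.eval e0 e1 e2 e4 Af x y = e2 ∨ s.eval e0 e1 e2 e4 Af x y = e4) := by
  cases s with
  | varx => exact Or.inl ⟨rfl, rfl⟩
  | vary => exact Or.inr (Or.inl ⟨rfl, rfl⟩)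
  | app1 p t => exact Or.inr (Or.inr (phi_consts p _))
  | app3 p q1 q2 t1 t2 t3 => exact Or.inr (Or.inr (mOp_consts p q1 q2 _ _ _))

end Lemma6Aux

section Lemma6Aux2

variable {X : Type u} {P : Type v} [SemilatticeSup P]
variable {e0 e1 e2 e4 : X} {Af : P → Set X}

/-- Every member of `C` takes, at any given tuple, either a value of the tuple or
one of the four constants. -/
lemma clone_range {n : ℕ} (f : (Fin (n + 1) → X) → X)
    (hf : f ∈ (CClone e0 e1 e2 e4 Af).carrier n) (x : Fin (n + 1) → X) :
    (∃ i, f x = x i) ∨ (f x = e0 ∨ f x = e1 ∨ f x = e2 ∨ f x = e4) := by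
  let D : Clone X :=
    { carrier := fun n => {f | ∀ x, (∃ i, f x = x i) ∨ (f x = e0 ∨ f x = e1 ∨ f x = e2 ∨ f x = e4)}
      proj_mem := fun n i x => Or.inl ⟨i, rfl⟩
      comp_mem := by
        intro m n f g hf hg x
        rcases hf (fun i => g i x) with ⟨i, hi⟩ | h
        · rcases hg i x with ⟨j, hj⟩ | h2
          · exact Or.inl ⟨j, hi.trans hj⟩
          · refine Or.inr ?_
            have : f (fun i => g i x) = e0 ∨ f (fun i => g i x) = e1 ∨
                f (fun i => g i x) = e2 ∨ f (fun i => g i x) = e4 := by rw [hi]; exact h2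
            exact this
        · exact Or.inr h }
  have hle : CClone e0 e1 e2 e4 Af ≤ D := by
    apply sInf_le
    intro k f hf
    rcases hf with hf | hf
    · match k with
      | 0 =>
        obtain ⟨p, -, rfl⟩ := hf
        exact fun x => Or.inr (phi_consts p (x 0))
      | (k + 1) => exact hf.elim
    · match k with
      | 0 => exact hf.elim
      | 1 => exact hf.elim
      | 2 =>
        obtain ⟨p, q1, q2, -, rfl⟩ := hf
        exact fun x => Or.inr (mOp_consts p q1 q2 (x 0) (x 1) (x 2))
      | (k + 3) => exact hf.elim
  exact hle n hf x

set_option maxHeartbeats 1600000 in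
/-- The decisive computation at the point `(2, a)` for an `m`-node. -/
lemma final_comp
    (hdist : e0 ≠ e1 ∧ e0 ≠ e2 ∧ e0 ≠ e4 ∧ e1 ≠ e2 ∧ e1 ≠ e4 ∧ e2 ≠ e4)
    (hAf : ∀ p : P, Af p ⊆ Aset e0 e1 e2 e4)
    {a : X} (ha : a ∈ Aset e0 e1 e2 e4)
    (p' q1 q2 : P) (u1 u2 u3 : X) (B2 B3 II2 II3 : Prop)
    (hu1 : e2 = u1 ∨ a = u1)
    (H2 : (u2 = e2 ∧ ¬B2) ∨ (u2 = e4 ∧ B2) ∨ (u2 = a ∧ ¬B2 ∧ u1 = e2) ∨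
          (u2 = (if a ∈ Af q1 then e1 else e0) ∧ (B2 ↔ a ∈ Af q1) ∧ II2))
    (H3 : (u3 = e2 ∧ ¬B3) ∨ (u3 = e4 ∧ B3) ∨ (u3 = a ∧ ¬B3 ∧ u1 = e2) ∨
          (u3 = (if a ∈ Af q2 then e1 else e0) ∧ (B3 ↔ a ∈ Af q2) ∧ II3))
    (hnb : u1 = a → ¬(II2 ∧ II3)) :
    (mOp e0 e1 e2 e4 Af p' q1 q2 u1 u2 u3 = e2 ∧ ¬(B2 ∨ B3)) ∨
    (mOp e0 e1 e2 e4 Af p' q1 q2 u1 u2 u3 = e4 ∧ (B2 ∨ B3)) := by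
  obtain ⟨d01, d02, d04, d12, d14, d24⟩ := hdist
  obtain ⟨na0, na1, na2, na4⟩ := mem_Aset_iff.1 ha
  rcases hu1 with rfl | rfl
  · -- u1 = e2
    by_cases hB : B2 ∨ B3
    · right
      refine ⟨mOp_eq4 ?_ ?_, hB⟩
      · rw [phi_e2 hAf q1, phi_e2 hAf q2]
        rintro ⟨h2', h3'⟩
        rcases hB with hB | hB
        · rcases H2 with ⟨_, hn⟩ | ⟨he, _⟩ | ⟨_, hn, _⟩ | ⟨he, hiff, _⟩
          · exact hn hB
          · rw [he] at h2'; exact d24 h2'.symm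
          · exact hn hB
          · rw [he, if_pos (hiff.1 hB)] at h2'; exact d12 h2'
        · rcases H3 with ⟨_, hn⟩ | ⟨he, _⟩ | ⟨_, hn, _⟩ | ⟨he, hiff, _⟩
          · exact hn hB
          · rw [he] at h3'; exact d24 h3'.symm
          · exact hn hB
          · rw [he, if_pos (hiff.1 hB)] at h3'; exact d12 h3'
      · rintro ⟨-, hy1, hy4, hz1, hz4⟩
        rcases hB with hB | hB
        · rcases H2 with ⟨_, hn⟩ | ⟨he, _⟩ | ⟨_, hn, _⟩ | ⟨he, hiff, _⟩
          · exact hn hB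
          · exact hy4 he
          · exact hn hB
          · rw [if_pos (hiff.1 hB)] at he; exact hy1 he
        · rcases H3 with ⟨_, hn⟩ | ⟨he, _⟩ | ⟨_, hn, _⟩ | ⟨he, hiff, _⟩
          · exact hn hB
          · exact hz4 he
          · exact hn hB
          · rw [if_pos (hiff.1 hB)] at he; exact hz1 he
    · left
      refine ⟨?_, hB⟩
      obtain ⟨hB2, hB3⟩ := not_or.1 hB
      have hu2 : u2 = e2 ∨ u2 = a ∨ u2 = e0 := by
        rcases H2 with ⟨he, _⟩ | ⟨_, hb⟩ | ⟨he, _, _⟩ | ⟨he, hiff, _⟩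
        · exact Or.inl he
        · exact absurd hb hB2
        · exact Or.inr (Or.inl he)
        · exact Or.inr (Or.inr (by rw [he, if_neg (fun h => hB2 (hiff.2 h))]))
      have hu3 : u3 = e2 ∨ u3 = a ∨ u3 = e0 := by
        rcases H3 with ⟨he, _⟩ | ⟨_, hb⟩ | ⟨he, _, _⟩ | ⟨he, hiff, _⟩
        · exact Or.inl he
        · exact absurd hb hB3
        · exact Or.inr (Or.inl he)
        · exact Or.inr (Or.inr (by rw [he, if_neg (fun h => hB3 (hiff.2 h))]))
      by_cases hc : u2 = e2 ∧ u3 = e2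
      · rw [mOp_eq1 (by rw [phi_e2 hAf q1]; exact hc.1) (by rw [phi_e2 hAf q2]; exact hc.2)]
        exact phi_e2 hAf p'
      · apply mOp_eq2
        · rw [phi_e2 hAf q1, phi_e2 hAf q2]; exact hc
        · exact Or.inl rfl
        · rcases hu2 with h | h | h <;> rw [h]
          exacts [d12.symm, na1, d01]
        · rcases hu2 with h | h | h <;> rw [h]
          exacts [d24, na4, d04]
        · rcases hu3 with h | h | h <;> rw [h]
          exacts [d12.symm, na1, d01]
        · rcases hu3 with h | h | h <;> rw [h]
          exacts [d24, na4, d04]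
  · -- u1 = a
    have hnotb1 : ¬(u2 = phi e0 e1 e2 e4 Af q1 a ∧ u3 = phi e0 e1 e2 e4 Af q2 a) := by
      rintro ⟨h2', h3'⟩
      have hw2 : u2 = e1 ∨ u2 = e0 := by
        rw [h2', phi_A hAf q1 ha]
        by_cases h : a ∈ Af q1
        · rw [if_pos h]; tauto
        · rw [if_neg h]; tauto
      have hw3 : u3 = e1 ∨ u3 = e0 := by
        rw [h3', phi_A hAf q2 ha]
        by_cases h : a ∈ Af q2
        · rw [if_pos h]; tauto
        · rw [if_neg h]; tauto
      have i2 : II2 := by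
        rcases H2 with ⟨he, _⟩ | ⟨he, _⟩ | ⟨_, _, hae⟩ | ⟨_, _, i⟩
        · rw [he] at hw2
          rcases hw2 with h | h
          · exact (d12 h.symm).elim
          · exact (d02 h.symm).elim
        · rw [he] at hw2
          rcases hw2 with h | h
          · exact (d14 h.symm).elim
          · exact (d04 h.symm).elim
        · exact (na2 hae).elim
        · exact i
      have i3 : II3 := by
        rcases H3 with ⟨he, _⟩ | ⟨he, _⟩ | ⟨_, _, hae⟩ | ⟨_, _, i⟩
        · rw [he] at hw3
          rcases hw3 with h | h
          · exact (d12 h.symm).elim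
          · exact (d02 h.symm).elim
        · rw [he] at hw3
          rcases hw3 with h | h
          · exact (d14 h.symm).elim
          · exact (d04 h.symm).elim
        · exact (na2 hae).elim
        · exact i
      exact hnb rfl ⟨i2, i3⟩
    by_cases hB : B2 ∨ B3
    · right
      refine ⟨mOp_eq4 hnotb1 ?_, hB⟩
      rintro ⟨-, hy1, hy4, hz1, hz4⟩
      rcases hB with hB | hB
      · rcases H2 with ⟨_, hn⟩ | ⟨he, _⟩ | ⟨_, hn, _⟩ | ⟨he, hiff, _⟩
        · exact hn hB
        · exact hy4 he
        · exact hn hB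
        · rw [if_pos (hiff.1 hB)] at he; exact hy1 he
      · rcases H3 with ⟨_, hn⟩ | ⟨he, _⟩ | ⟨_, hn, _⟩ | ⟨he, hiff, _⟩
        · exact hn hB
        · exact hz4 he
        · exact hn hB
        · rw [if_pos (hiff.1 hB)] at he; exact hz1 he
    · left
      refine ⟨?_, hB⟩
      obtain ⟨hB2, hB3⟩ := not_or.1 hB
      have hu2 : u2 = e2 ∨ (u2 = e0 ∧ II2) := by
        rcases H2 with ⟨he, _⟩ | ⟨_, hb⟩ | ⟨_, _, hae⟩ | ⟨he, hiff, i⟩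
        · exact Or.inl he
        · exact absurd hb hB2
        · exact (na2 hae).elim
        · exact Or.inr ⟨by rw [he, if_neg (fun h => hB2 (hiff.2 h))], i⟩
      have hu3 : u3 = e2 ∨ (u3 = e0 ∧ II3) := by
        rcases H3 with ⟨he, _⟩ | ⟨_, hb⟩ | ⟨_, _, hae⟩ | ⟨he, hiff, i⟩
        · exact Or.inl he
        · exact absurd hb hB3
        · exact (na2 hae).elim
        · exact Or.inr ⟨by rw [he, if_neg (fun h => hB3 (hiff.2 h))], i⟩
      have h2or : u2 = e2 ∨ u3 = e2 := by
        rcases hu2 with h | ⟨h, i2⟩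
        · exact Or.inl h
        rcases hu3 with h | ⟨h, i3⟩
        · exact Or.inr h
        exact absurd ⟨i2, i3⟩ (hnb rfl)
      apply mOp_eq2 hnotb1 (Or.inr h2or)
      · rcases hu2 with h | ⟨h, _⟩ <;> rw [h]
        exacts [d12.symm, d01]
      · rcases hu2 with h | ⟨h, _⟩ <;> rw [h]
        exacts [d24, d04]
      · rcases hu3 with h | ⟨h, _⟩ <;> rw [h]
        exacts [d12.symm, d01]
      · rcases hu3 with h | ⟨h, _⟩ <;> rw [h]
        exacts [d24, d04]

end Lemma6Aux2

section Lemma6Main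

variable {X : Type u} {P : Type v} [SemilatticeSup P]

set_option maxHeartbeats 3200000 in
lemma main_lemma
    (e0 e1 e2 e4 : X)
    (hdist : e0 ≠ e1 ∧ e0 ≠ e2 ∧ e0 ≠ e4 ∧ e1 ≠ e2 ∧ e1 ≠ e4 ∧ e2 ≠ e4)
    (Af : P → Set X) (hAf : ∀ p : P, Af p ⊆ Aset e0 e1 e2 e4)
    (hcover : ∀ (p : P) (k : ℕ) (q : Fin k → P),
      (∀ i, p ≠ q i) → ¬ Af p ⊆ ⋃ i, Af (q i))
    (a : X) (ha : a ∈ Aset e0 e1 e2 e4)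
    (s1 s2 : X → X)
    (hs1 : ∀ w, s1 w = w ∨ s1 w ∉ Aset e0 e1 e2 e4)
    (hs2 : ∀ w, s2 w = w ∨ s2 w ∉ Aset e0 e1 e2 e4) :
    ∀ s : CTerm P, s.Reduced →
      ∀ c : P, (∀ w ∈ Aset e0 e1 e2 e4,
          s.eval e0 e1 e2 e4 Af (s1 w) (s2 w) = if w ∈ Af c then e1 else e0) →
      s = CTerm.vary ∨ s = CTerm.app1 c CTerm.vary ∨
      (s.eval e0 e1 e2 e4 Af e2 a = e2 ∧ a ∉ ⋃ v ∈ s.leafPhiY, Af v) ∨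
      (s.eval e0 e1 e2 e4 Af e2 a = e4 ∧ a ∈ ⋃ v ∈ s.leafPhiY, Af v) := by
  have d01 := hdist.1
  have d02 := hdist.2.1
  have d04 := hdist.2.2.1
  have d12 := hdist.2.2.2.1
  have d14 := hdist.2.2.2.2.1
  have d24 := hdist.2.2.2.2.2
  obtain ⟨na0, na1, na2, na4⟩ := mem_Aset_iff.1 ha
  intro s
  induction s with
  | varx =>
    intro _ c _
    refine Or.inr (Or.inr (Or.inl ⟨rfl, ?_⟩))
    simp [CTerm.leafPhiY]
  | vary =>
    intro _ c _
    exact Or.inl rfl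
  | app1 q t ih =>
    intro hred c hlive
    have hne20 : ∀ w : X, (if w ∈ Af c then e1 else e0) ≠ e2 := by
      intro w; split_ifs; exacts [d12, d02]
    have hne40 : ∀ w : X, (if w ∈ Af c then e1 else e0) ≠ e4 := by
      intro w; split_ifs; exacts [d14, d04]
    cases t with
    | varx =>
      refine Or.inr (Or.inr (Or.inl ⟨?_, ?_⟩))
      · simp only [CTerm.eval]
        exact phi_e2 hAf q
      · simp [CTerm.leafPhiY]
    | vary =>
      have hsub : ∀ w ∈ Aset e0 e1 e2 e4, s2 w = w := by
        intro w hw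
        rcases hs2 w with h2 | h2
        · exact h2
        · exfalso
          have h := hlive w hw
          simp only [CTerm.eval] at h
          rcases phi_notA hAf q h2 with h3 | h3 <;> rw [h3] at h
          · exact hne20 w h.symm
          · exact hne40 w h.symm
      have hiff : ∀ w ∈ Aset e0 e1 e2 e4, (w ∈ Af q ↔ w ∈ Af c) := by
        intro w hw
        have h := hlive w hw
        simp only [CTerm.eval] at h
        rw [hsub w hw, phi_A hAf q hw] at h
        by_cases h1 : w ∈ Af q <;> by_cases h2 : w ∈ Af c
        · exact iff_of_true h1 h2
        · rw [if_pos h1, if_neg h2] at h; exact (d01 h.symm).elim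
        · rw [if_neg h1, if_pos h2] at h; exact (d01 h).elim
        · exact iff_of_false h1 h2
      exact Or.inr (Or.inl (by rw [index_eq hAf hcover hiff]))
    | app1 q' t' =>
      exfalso
      have h := hlive a ha
      simp only [CTerm.eval] at h
      have hz : phi e0 e1 e2 e4 Af q' (CTerm.eval e0 e1 e2 e4 Af t' (s1 a) (s2 a))
          ∉ Aset e0 e1 e2 e4 := not_mem_Aset (phi_consts q' _)
      rcases phi_notA hAf q hz with h3 | h3 <;> rw [h3] at h
      · exact hne20 a h.symm
      · exact hne40 a h.symm
    | app3 p3 q13 q23 u1 u2 u3 =>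
      exfalso
      have h := hlive a ha
      simp only [CTerm.eval] at h
      have hz : mOp e0 e1 e2 e4 Af p3 q13 q23 (CTerm.eval e0 e1 e2 e4 Af u1 (s1 a) (s2 a))
          (CTerm.eval e0 e1 e2 e4 Af u2 (s1 a) (s2 a))
          (CTerm.eval e0 e1 e2 e4 Af u3 (s1 a) (s2 a)) ∉ Aset e0 e1 e2 e4 :=
        not_mem_Aset (mOp_consts p3 q13 q23 _ _ _)
      rcases phi_notA hAf q hz with h3 | h3 <;> rw [h3] at h
      · exact hne20 a h.symm
      · exact hne40 a h.symm
  | app3 p' q1 q2 t1 t2 t3 ih1 ih2 ih3 =>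
    intro hred c hlive
    have hne20 : ∀ w : X, (if w ∈ Af c then e1 else e0) ≠ e2 := by
      intro w; split_ifs; exacts [d12, d02]
    have hne40 : ∀ w : X, (if w ∈ Af c then e1 else e0) ≠ e4 := by
      intro w; split_ifs; exacts [d14, d04]
    obtain ⟨hnr, hr1, hr2, hr3⟩ := hred
    have key : ∀ w ∈ Aset e0 e1 e2 e4,
        (CTerm.eval e0 e1 e2 e4 Af t2 (s1 w) (s2 w) =
            phi e0 e1 e2 e4 Af q1 (CTerm.eval e0 e1 e2 e4 Af t1 (s1 w) (s2 w)) ∧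
         CTerm.eval e0 e1 e2 e4 Af t3 (s1 w) (s2 w) =
            phi e0 e1 e2 e4 Af q2 (CTerm.eval e0 e1 e2 e4 Af t1 (s1 w) (s2 w))) ∧
        phi e0 e1 e2 e4 Af p' (CTerm.eval e0 e1 e2 e4 Af t1 (s1 w) (s2 w)) =
          (if w ∈ Af c then e1 else e0) := by
      intro w hw
      have h := hlive w hw
      simp only [CTerm.eval] at h
      have hb2 := hne20 w
      have hb4 := hne40 w
      set b := (if w ∈ Af c then e1 else e0) with hbdef
      unfold mOp at h
      split_ifs at h with hA hB
      · exact ⟨hA, h⟩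
      · exact (hb2 h.symm).elim
      · exact (hb4 h.symm).elim
    have ht1A : ∀ w ∈ Aset e0 e1 e2 e4,
        CTerm.eval e0 e1 e2 e4 Af t1 (s1 w) (s2 w) ∈ Aset e0 e1 e2 e4 := by
      intro w hw
      by_contra hz
      have h := (key w hw).2
      rcases phi_notA hAf p' hz with h3 | h3 <;> rw [h3] at h
      · exact hne20 w h.symm
      · exact hne40 w h.symm
    rcases eval_var_or_consts (e0 := e0) (e1 := e1) (e2 := e2) (e4 := e4) (Af := Af)
        t1 (s1 a) (s2 a) with ⟨ht1, -⟩ | ⟨ht1, -⟩ | hc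
    · -- t1 = varx
      subst ht1
      have hid : ∀ w ∈ Aset e0 e1 e2 e4, s1 w = w := by
        intro w hw
        rcases hs1 w with h | h
        · exact h
        · exact absurd (ht1A w hw) h
      have live2 : ∀ w ∈ Aset e0 e1 e2 e4,
          CTerm.eval e0 e1 e2 e4 Af t2 (s1 w) (s2 w) = if w ∈ Af q1 then e1 else e0 := by
        intro w hw
        have h := (key w hw).1.1
        simp only [CTerm.eval] at h
        rw [h, hid w hw, phi_A hAf q1 hw]
      have live3 : ∀ w ∈ Aset e0 e1 e2 e4,
          CTerm.eval e0 e1 e2 e4 Af t3 (s1 w) (s2 w) = if w ∈ Af q2 then e1 else e0 := by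
        intro w hw
        have h := (key w hw).1.2
        simp only [CTerm.eval] at h
        rw [h, hid w hw, phi_A hAf q2 hw]
      have IH2 := ih2 hr2 q1 live2
      have IH3 := ih3 hr3 q2 live3
      have H2 : (CTerm.eval e0 e1 e2 e4 Af t2 e2 a = e2 ∧ ¬(a ∈ ⋃ v ∈ t2.leafPhiY, Af v)) ∨
          (CTerm.eval e0 e1 e2 e4 Af t2 e2 a = e4 ∧ (a ∈ ⋃ v ∈ t2.leafPhiY, Af v)) ∨
          (CTerm.eval e0 e1 e2 e4 Af t2 e2 a = a ∧ ¬(a ∈ ⋃ v ∈ t2.leafPhiY, Af v) ∧ e2 = e2) ∨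
          (CTerm.eval e0 e1 e2 e4 Af t2 e2 a = (if a ∈ Af q1 then e1 else e0) ∧
            ((a ∈ ⋃ v ∈ t2.leafPhiY, Af v) ↔ a ∈ Af q1) ∧ t2 = CTerm.app1 q1 CTerm.vary) := by
        rcases IH2 with rfl | rfl | ⟨h, hn⟩ | ⟨h, hm⟩
        · refine Or.inr (Or.inr (Or.inl ⟨rfl, ?_, rfl⟩))
          simp [CTerm.leafPhiY]
        · refine Or.inr (Or.inr (Or.inr ⟨?_, ?_, rfl⟩))
          · simp only [CTerm.eval]
            rw [phi_A hAf q1 ha]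
          · simp [CTerm.leafPhiY]
        · exact Or.inl ⟨h, hn⟩
        · exact Or.inr (Or.inl ⟨h, hm⟩)
      have H3 : (CTerm.eval e0 e1 e2 e4 Af t3 e2 a = e2 ∧ ¬(a ∈ ⋃ v ∈ t3.leafPhiY, Af v)) ∨
          (CTerm.eval e0 e1 e2 e4 Af t3 e2 a = e4 ∧ (a ∈ ⋃ v ∈ t3.leafPhiY, Af v)) ∨
          (CTerm.eval e0 e1 e2 e4 Af t3 e2 a = a ∧ ¬(a ∈ ⋃ v ∈ t3.leafPhiY, Af v) ∧ e2 = e2) ∨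
          (CTerm.eval e0 e1 e2 e4 Af t3 e2 a = (if a ∈ Af q2 then e1 else e0) ∧
            ((a ∈ ⋃ v ∈ t3.leafPhiY, Af v) ↔ a ∈ Af q2) ∧ t3 = CTerm.app1 q2 CTerm.vary) := by
        rcases IH3 with rfl | rfl | ⟨h, hn⟩ | ⟨h, hm⟩
        · refine Or.inr (Or.inr (Or.inl ⟨rfl, ?_, rfl⟩))
          simp [CTerm.leafPhiY]
        · refine Or.inr (Or.inr (Or.inr ⟨?_, ?_, rfl⟩))
          · simp only [CTerm.eval]
            rw [phi_A hAf q2 ha]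
          · simp [CTerm.leafPhiY]
        · exact Or.inl ⟨h, hn⟩
        · exact Or.inr (Or.inl ⟨h, hm⟩)
      have FC := final_comp hdist hAf ha p' q1 q2 e2
        (CTerm.eval e0 e1 e2 e4 Af t2 e2 a) (CTerm.eval e0 e1 e2 e4 Af t3 e2 a)
        (a ∈ ⋃ v ∈ t2.leafPhiY, Af v) (a ∈ ⋃ v ∈ t3.leafPhiY, Af v)
        (t2 = CTerm.app1 q1 CTerm.vary) (t3 = CTerm.app1 q2 CTerm.vary)
        (Or.inl rfl) H2 H3 (fun h => absurd h.symm na2)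
      have hLiff : (a ∈ ⋃ v ∈ (CTerm.app3 p' q1 q2 CTerm.varx t2 t3).leafPhiY, Af v) ↔
          ((a ∈ ⋃ v ∈ t2.leafPhiY, Af v) ∨ (a ∈ ⋃ v ∈ t3.leafPhiY, Af v)) := by
        simp only [CTerm.leafPhiY]
        rw [mem_triple_union]
        simp [CTerm.leafPhiY]
      rcases FC with ⟨hv, hn⟩ | ⟨hv, hm⟩
      · refine Or.inr (Or.inr (Or.inl ⟨?_, ?_⟩))
        · simp only [CTerm.eval]
          exact hv
        · rw [hLiff]; exact hn
      · refine Or.inr (Or.inr (Or.inr ⟨?_, ?_⟩))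
        · simp only [CTerm.eval]
          exact hv
        · rw [hLiff]; exact hm
    · -- t1 = vary
      subst ht1
      have hid : ∀ w ∈ Aset e0 e1 e2 e4, s2 w = w := by
        intro w hw
        rcases hs2 w with h | h
        · exact h
        · exact absurd (ht1A w hw) h
      have live2 : ∀ w ∈ Aset e0 e1 e2 e4,
          CTerm.eval e0 e1 e2 e4 Af t2 (s1 w) (s2 w) = if w ∈ Af q1 then e1 else e0 := by
        intro w hw
        have h := (key w hw).1.1
        simp only [CTerm.eval] at h
        rw [h, hid w hw, phi_A hAf q1 hw]
      have live3 : ∀ w ∈ Aset e0 e1 e2 e4,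
          CTerm.eval e0 e1 e2 e4 Af t3 (s1 w) (s2 w) = if w ∈ Af q2 then e1 else e0 := by
        intro w hw
        have h := (key w hw).1.2
        simp only [CTerm.eval] at h
        rw [h, hid w hw, phi_A hAf q2 hw]
      have IH2 := ih2 hr2 q1 live2
      have IH3 := ih3 hr3 q2 live3
      have H2 : (CTerm.eval e0 e1 e2 e4 Af t2 e2 a = e2 ∧ ¬(a ∈ ⋃ v ∈ t2.leafPhiY, Af v)) ∨
          (CTerm.eval e0 e1 e2 e4 Af t2 e2 a = e4 ∧ (a ∈ ⋃ v ∈ t2.leafPhiY, Af v)) ∨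
          (CTerm.eval e0 e1 e2 e4 Af t2 e2 a = a ∧ ¬(a ∈ ⋃ v ∈ t2.leafPhiY, Af v) ∧ a = e2) ∨
          (CTerm.eval e0 e1 e2 e4 Af t2 e2 a = (if a ∈ Af q1 then e1 else e0) ∧
            ((a ∈ ⋃ v ∈ t2.leafPhiY, Af v) ↔ a ∈ Af q1) ∧ t2 = CTerm.app1 q1 CTerm.vary) := by
        rcases IH2 with rfl | rfl | ⟨h, hn⟩ | ⟨h, hm⟩
        · exfalso
          have h := live2 a ha
          simp only [CTerm.eval] at h
          rw [hid a ha] at h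
          by_cases h1 : a ∈ Af q1
          · rw [if_pos h1] at h; exact na1 h
          · rw [if_neg h1] at h; exact na0 h
        · refine Or.inr (Or.inr (Or.inr ⟨?_, ?_, rfl⟩))
          · simp only [CTerm.eval]
            rw [phi_A hAf q1 ha]
          · simp [CTerm.leafPhiY]
        · exact Or.inl ⟨h, hn⟩
        · exact Or.inr (Or.inl ⟨h, hm⟩)
      have H3 : (CTerm.eval e0 e1 e2 e4 Af t3 e2 a = e2 ∧ ¬(a ∈ ⋃ v ∈ t3.leafPhiY, Af v)) ∨
          (CTerm.eval e0 e1 e2 e4 Af t3 e2 a = e4 ∧ (a ∈ ⋃ v ∈ t3.leafPhiY, Af v)) ∨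
          (CTerm.eval e0 e1 e2 e4 Af t3 e2 a = a ∧ ¬(a ∈ ⋃ v ∈ t3.leafPhiY, Af v) ∧ a = e2) ∨
          (CTerm.eval e0 e1 e2 e4 Af t3 e2 a = (if a ∈ Af q2 then e1 else e0) ∧
            ((a ∈ ⋃ v ∈ t3.leafPhiY, Af v) ↔ a ∈ Af q2) ∧ t3 = CTerm.app1 q2 CTerm.vary) := by
        rcases IH3 with rfl | rfl | ⟨h, hn⟩ | ⟨h, hm⟩
        · exfalso
          have h := live3 a ha
          simp only [CTerm.eval] at h
          rw [hid a ha] at h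
          by_cases h1 : a ∈ Af q2
          · rw [if_pos h1] at h; exact na1 h
          · rw [if_neg h1] at h; exact na0 h
        · refine Or.inr (Or.inr (Or.inr ⟨?_, ?_, rfl⟩))
          · simp only [CTerm.eval]
            rw [phi_A hAf q2 ha]
          · simp [CTerm.leafPhiY]
        · exact Or.inl ⟨h, hn⟩
        · exact Or.inr (Or.inl ⟨h, hm⟩)
      have FC := final_comp hdist hAf ha p' q1 q2 a
        (CTerm.eval e0 e1 e2 e4 Af t2 e2 a) (CTerm.eval e0 e1 e2 e4 Af t3 e2 a)
        (a ∈ ⋃ v ∈ t2.leafPhiY, Af v) (a ∈ ⋃ v ∈ t3.leafPhiY, Af v)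
        (t2 = CTerm.app1 q1 CTerm.vary) (t3 = CTerm.app1 q2 CTerm.vary)
        (Or.inr rfl) H2 H3
        (fun _ hii => hnr ⟨CTerm.vary, Or.inr rfl, rfl, hii.1, hii.2⟩)
      have hLiff : (a ∈ ⋃ v ∈ (CTerm.app3 p' q1 q2 CTerm.vary t2 t3).leafPhiY, Af v) ↔
          ((a ∈ ⋃ v ∈ t2.leafPhiY, Af v) ∨ (a ∈ ⋃ v ∈ t3.leafPhiY, Af v)) := by
        simp only [CTerm.leafPhiY]
        rw [mem_triple_union]
        simp [CTerm.leafPhiY]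
      rcases FC with ⟨hv, hn⟩ | ⟨hv, hm⟩
      · refine Or.inr (Or.inr (Or.inl ⟨?_, ?_⟩))
        · simp only [CTerm.eval]
          exact hv
        · rw [hLiff]; exact hn
      · refine Or.inr (Or.inr (Or.inr ⟨?_, ?_⟩))
        · simp only [CTerm.eval]
          exact hv
        · rw [hLiff]; exact hm
    · exact absurd (ht1A a ha) (not_mem_Aset hc)

end Lemma6Main


/-- Lemma 6: if `r(x,y)` is a reduced term representation of an unspoilt binary
function in `C` depending on both of its variables, then for `a ∈ A` we have
`r(2,a) = 4` iff `a ∈ ⋃ (A_v : φ_v(y) ∈ Leaf(r))`. -/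
theorem eval_at_two_eq_four_iff
    {X : Type u} {P : Type v} [Infinite X] [SemilatticeSup P]
    (e0 e1 e2 e4 : X)
    (hdist : e0 ≠ e1 ∧ e0 ≠ e2 ∧ e0 ≠ e4 ∧ e1 ≠ e2 ∧ e1 ≠ e4 ∧ e2 ≠ e4)
    (hcard : Cardinal.lift.{u} (Cardinal.mk P) ≤ Cardinal.lift.{v} (2 ^ Cardinal.mk X))
    (Af : P → Set X) (hAf : ∀ p : P, Af p ⊆ Aset e0 e1 e2 e4)
    (hcover : ∀ (p : P) (k : ℕ) (q : Fin k → P),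
      (∀ i, p ≠ q i) → ¬ Af p ⊆ ⋃ i, Af (q i))
    (r : CTerm P) (hvalid : r.Valid) (hred : r.Reduced)
    (t : (Fin 2 → X) → X)
    (htr : t = fun v : Fin 2 → X => r.eval e0 e1 e2 e4 Af (v 0) (v 1))
    (ht : t ∈ (CClone e0 e1 e2 e4 Af).carrier 1)
    (hunsp : Unspoilt e0 e1 e2 e4 Af t)
    (hdep0 : DependsOnVar t 0) (hdep1 : DependsOnVar t 1)
    (a : X) (ha : a ∈ Aset e0 e1 e2 e4) :
    r.eval e0 e1 e2 e4 Af e2 a = e4 ↔ a ∈ ⋃ v ∈ r.leafPhiY, Af v := by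
  subst htr
  obtain ⟨ts, hts, hphi⟩ := hunsp
  obtain ⟨p0, -, hp0⟩ := hphi
  set s1 : X → X := fun w => ts 0 (fun _ => w) with hs1def
  set s2 : X → X := fun w => ts 1 (fun _ => w) with hs2def
  have hQ : ∀ (i : Fin 2) (w : X),
      ts i (fun _ => w) = w ∨ ts i (fun _ => w) ∉ Aset e0 e1 e2 e4 := by
    intro i w
    rcases clone_range (ts i) (hts i) (fun _ => w) with ⟨j, hj⟩ | h
    · exact Or.inl hj
    · exact Or.inr (not_mem_Aset h)
  have hlive : ∀ w ∈ Aset e0 e1 e2 e4,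
      r.eval e0 e1 e2 e4 Af (s1 w) (s2 w) = if w ∈ Af p0 then e1 else e0 := by
    intro w hw
    have h : r.eval e0 e1 e2 e4 Af (s1 w) (s2 w) = phi e0 e1 e2 e4 Af p0 w :=
      congrFun hp0 (fun _ => w)
    rw [phi_A hAf p0 hw] at h
    exact h
  rcases main_lemma e0 e1 e2 e4 hdist Af hAf hcover a ha s1 s2
      (fun w => hQ 0 w) (fun w => hQ 1 w) r hred p0 hlive with rfl | rfl | ⟨h2, hn⟩ | ⟨h4, hm⟩
  · exfalso
    obtain ⟨α, β, hab, hne⟩ := hdep0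
    exact hne (hab 1 (by decide))
  · exfalso
    obtain ⟨α, β, hab, hne⟩ := hdep0
    apply hne
    show phi e0 e1 e2 e4 Af p0 (α 1) = phi e0 e1 e2 e4 Af p0 (β 1)
    rw [hab 1 (by decide)]
  · exact iff_of_false (fun hh => hdist.2.2.2.2.2 (h2.symm.trans hh)) hn
  · exact iff_of_true h4 hm
end
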